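/- Let r₀ > 0, let α ≥ 0, and let β : (r₀,∞) → ℝ and ψ : (r₀,∞) → ℝ be Lebesgue measurable and nonnegative with ∫_{r₀}^∞ r^α β(r) ψ(r) dr < ∞. Then 2 ∫_{r₀}^∞ r^α ( ∫_r^∞ κ(r, r̃) β(r̃) ψ(r̃) dr̃ ) dr = (2/(α+1)) ∫_{r₀}^∞ r^α β(r) ψ(r) dr − (2 r₀^{α+1}/(α+1)) ∫_{r₀}^∞ β(r) ψ(r)/r dr. -/

import Mathlib

open MeasureTheory Set

/-- The fragmentation kernel of assumption (A4):
`κ(r, r̃) = 1/r̃` if `r̃ > r₀` and `0 < r < r̃`, and `0` otherwise. -/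
noncomputable def kappa (r₀ r rt : ℝ) : ℝ :=
  if r₀ < rt ∧ 0 < r ∧ r < rt then 1 / rt else 0

/-- The central computation in the proof of the high-order-moments lemma:
`2 ∫_{r₀}^∞ r^α (∫_r^∞ κ(r,r̃) β(r̃) ψ(r̃) dr̃) dr
  = (2/(α+1)) ∫_{r₀}^∞ r^α β ψ dr − (2 r₀^(α+1)/(α+1)) ∫_{r₀}^∞ β ψ / r dr`. -/
theorem stmt2 (r₀ α : ℝ) (hr₀ : 0 < r₀) (hα : 0 ≤ α) (β ψ : ℝ → ℝ)
    (hβm : AEMeasurable β (volume.restrict (Set.Ioi r₀)))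
    (hψm : AEMeasurable ψ (volume.restrict (Set.Ioi r₀)))
    (hβ0 : ∀ r ∈ Set.Ioi r₀, 0 ≤ β r) (hψ0 : ∀ r ∈ Set.Ioi r₀, 0 ≤ ψ r)
    (hint : IntegrableOn (fun r => r ^ α * (β r * ψ r)) (Set.Ioi r₀)) :
    2 * ∫ r in Set.Ioi r₀, r ^ α * ∫ rt in Set.Ioi r, kappa r₀ r rt * (β rt * ψ rt)
      = (2 / (α + 1)) * (∫ r in Set.Ioi r₀, r ^ α * (β r * ψ r))
        - (2 * r₀ ^ (α + 1) / (α + 1)) * ∫ r in Set.Ioi r₀, β r * ψ r / r := by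
  have hα1 : (0:ℝ) < α + 1 := by linarith
  -- continuity / measurability of r ↦ r ^ α
  have hcont : Continuous fun r : ℝ => r ^ α :=
    continuous_iff_continuousAt.mpr fun x => Real.continuousAt_rpow_const x α (Or.inr hα)
  -- a measurable nonnegative representative `g` of `βψ` on `Ioi r₀` (0 elsewhere)
  set G : ℝ → ℝ := (Ioi r₀).indicator (fun r => β r * ψ r) with hGdef
  have hGaem : AEMeasurable G volume :=
    (aemeasurable_indicator_iff measurableSet_Ioi).mpr (hβm.mul hψm)
  obtain ⟨g0, hg0meas, hGg0⟩ := hGaem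
  set g : ℝ → ℝ := fun x => max (g0 x) 0 with hgdef
  have hg : Measurable g := hg0meas.max measurable_const
  have hmeasdiv : Measurable fun x : ℝ => g x / x := hg.div measurable_id
  have hmeasofdiv : Measurable fun x : ℝ => ENNReal.ofReal (g x / x) := hmeasdiv.ennreal_ofReal
  have hmeasofrp : Measurable fun r : ℝ => ENNReal.ofReal (r ^ α) :=
    hcont.measurable.ennreal_ofReal
  have hgnn : ∀ x, 0 ≤ g x := fun x => le_max_right _ _
  have hGnn : ∀ x, 0 ≤ G x :=
    indicator_nonneg fun y hy => mul_nonneg (hβ0 y hy) (hψ0 y hy)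
  have hGg : G =ᵐ[volume] g := by
    filter_upwards [hGg0] with x hx
    rw [hgdef]
    simp only
    rw [← hx, max_eq_left (hGnn x)]
  have hmem := self_mem_ae_restrict (measurableSet_Ioi (a := r₀)) (μ := volume)
  -- βψ agrees a.e. with g on Ioi r₀
  have hae1 : (fun r => β r * ψ r) =ᵐ[volume.restrict (Ioi r₀)] g := by
    filter_upwards [ae_restrict_of_ae hGg, hmem] with r h1 h2
    show β r * ψ r = g r
    rw [← h1]
    exact (indicator_of_mem h2 fun y => β y * ψ y).symm
  -- integrability facts
  have hae2 : (fun r => r ^ α * (β r * ψ r)) =ᵐ[volume.restrict (Ioi r₀)] fun r => r ^ α * g r := by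
    filter_upwards [hae1] with r h
    have h' : β r * ψ r = g r := h
    show r ^ α * (β r * ψ r) = r ^ α * g r
    rw [h']
  have hA : IntegrableOn (fun r => r ^ α * g r) (Ioi r₀) := hint.congr hae2
  set A : ℝ := ∫ r in Ioi r₀, r ^ α * g r with hAdef
  have hBbound : ∀ r ∈ Ioi r₀, g r / r ≤ (r₀ ^ (α + 1))⁻¹ * (r ^ α * g r) := by
    intro r hr
    have hr0 : (0:ℝ) < r := lt_trans hr₀ hr
    have h1 : r₀ ^ (α + 1) ≤ r ^ (α + 1) :=
      Real.rpow_le_rpow hr₀.le (le_of_lt hr) (by linarith)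
    have h2 : r ^ (α + 1) = r ^ α * r := Real.rpow_add_one hr0.ne' α
    have hp : (0:ℝ) < r₀ ^ (α + 1) := Real.rpow_pos_of_pos hr₀ _
    rw [div_le_iff₀ hr0]
    calc g r ≤ (r₀ ^ (α + 1))⁻¹ * (r ^ (α+1)) * g r := by
          nlinarith [hgnn r, (inv_pos.mpr hp), mul_le_mul_of_nonneg_left h1 (inv_pos.mpr hp).le,
            inv_mul_cancel₀ hp.ne']
      _ = (r₀ ^ (α + 1))⁻¹ * (r ^ α * g r) * r := by rw [h2]; ring
  have hB : IntegrableOn (fun r => g r / r) (Ioi r₀) := by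
    refine Integrable.mono (hA.const_mul ((r₀ ^ (α + 1))⁻¹)) ((hg.div measurable_id).aestronglyMeasurable) ?_
    filter_upwards [hmem] with r hr
    have hr0 : (0:ℝ) < r := lt_trans hr₀ hr
    have h1 : 0 ≤ g r / r := div_nonneg (hgnn r) hr0.le
    have h2 : 0 ≤ (r₀ ^ (α + 1))⁻¹ * (r ^ α * g r) :=
      mul_nonneg (inv_nonneg.mpr (Real.rpow_pos_of_pos hr₀ _).le)
        (mul_nonneg (Real.rpow_nonneg hr0.le _) (hgnn r))
    rw [Real.norm_eq_abs, Real.norm_eq_abs, abs_of_nonneg h1, abs_of_nonneg h2]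
    exact hBbound r hr
  set B : ℝ := ∫ r in Ioi r₀, g r / r with hBdef
  -- the inner lintegral
  set Λ : ℝ → ENNReal := fun r => ∫⁻ rt in Ioi r, ENNReal.ofReal (g rt / rt) with hΛdef
  have hΛanti : Antitone Λ := fun r s hrs =>
    lintegral_mono' (Measure.restrict_mono (Ioi_subset_Ioi hrs) le_rfl) le_rfl
  have hΛmeas : Measurable Λ := hΛanti.measurable
  have hBnnae : 0 ≤ᵐ[volume.restrict (Ioi r₀)] fun r => g r / r := by
    filter_upwards [hmem] with r hr
    exact div_nonneg (hgnn r) (lt_trans hr₀ hr).le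
  have hΛr₀ : Λ r₀ = ENNReal.ofReal B :=
    (ofReal_integral_eq_lintegral_ofReal hB hBnnae).symm
  have hΛfin : ∀ r, r₀ ≤ r → Λ r ≠ ⊤ := by
    intro r hr
    exact ne_top_of_le_ne_top (by rw [hΛr₀]; exact ENNReal.ofReal_ne_top) (hΛanti hr)
  -- inner integral identification
  have hinner : ∀ r ∈ Ioi r₀,
      (∫ rt in Ioi r, kappa r₀ r rt * (β rt * ψ rt)) = (Λ r).toReal := by
    intro r hr
    have h1 : (∫ rt in Ioi r, kappa r₀ r rt * (β rt * ψ rt)) = ∫ rt in Ioi r, g rt / rt := by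
      apply integral_congr_ae
      filter_upwards [ae_restrict_of_ae hGg, self_mem_ae_restrict (measurableSet_Ioi (a := r)) (μ := volume)]
        with rt hGrt hrt
      have hrt' : r₀ < rt := lt_trans hr hrt
      rw [kappa, if_pos ⟨hrt', lt_trans hr₀ hr, hrt⟩]
      have : β rt * ψ rt = G rt := (indicator_of_mem (mem_Ioi.mpr hrt') fun y => β y * ψ y).symm
      rw [show (1:ℝ)/rt * (β rt * ψ rt) = β rt * ψ rt / rt by ring, this, hGrt]
    have hnn : 0 ≤ᵐ[volume.restrict (Ioi r)] fun rt => g rt / rt := by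
      filter_upwards [self_mem_ae_restrict (measurableSet_Ioi (a := r)) (μ := volume)] with rt hrt
      exact div_nonneg (hgnn rt) (lt_trans hr₀ (lt_trans hr hrt)).le
    rw [h1, integral_eq_lintegral_of_nonneg_ae hnn hmeasdiv.aestronglyMeasurable]
  -- outer integral as a lintegral
  set L : ENNReal := ∫⁻ r in Ioi r₀, ENNReal.ofReal (r ^ α) * Λ r with hLdef
  have hLHS : (∫ r in Ioi r₀, r ^ α * ∫ rt in Ioi r, kappa r₀ r rt * (β rt * ψ rt))
      = L.toReal := by
    rw [setIntegral_congr_fun (measurableSet_Ioi)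
      (fun r hr => by dsimp only; rw [hinner r hr] :
        EqOn (fun r => r ^ α * ∫ rt in Ioi r, kappa r₀ r rt * (β rt * ψ rt))
          (fun r => r ^ α * (Λ r).toReal) (Ioi r₀))]
    rw [integral_eq_lintegral_of_nonneg_ae ?_ ?_]
    · congr 1
      apply lintegral_congr_ae
      filter_upwards [hmem] with r hr
      have hr0 : (0:ℝ) ≤ r := (lt_trans hr₀ hr).le
      rw [ENNReal.ofReal_mul (Real.rpow_nonneg hr0 _), ENNReal.ofReal_toReal (hΛfin r (le_of_lt hr))]
    · filter_upwards [hmem] with r hr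
      exact mul_nonneg (Real.rpow_nonneg (lt_trans hr₀ hr).le _) ENNReal.toReal_nonneg
    · exact ((hcont.measurable.mul hΛmeas.ennreal_toReal)).aestronglyMeasurable
  -- the two-variable function for Fubini
  set F : ℝ → ℝ → ENNReal := fun r rt =>
    (Ioi r).indicator (fun s => ENNReal.ofReal (r ^ α * (g s / s))) rt with hFdef
  have hFunc : Function.uncurry F = fun p : ℝ × ℝ =>
      {q : ℝ × ℝ | q.1 < q.2}.indicator (fun q => ENNReal.ofReal (q.1 ^ α * (g q.2 / q.2))) p := by
    funext p
    simp [hFdef, Function.uncurry, Set.indicator_apply, mem_Ioi, mem_setOf_eq]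
  have hFmeas : AEMeasurable (Function.uncurry F)
      ((volume.restrict (Ioi r₀)).prod volume) := by
    rw [hFunc]
    exact (Measurable.indicator
      (((hcont.measurable.comp measurable_fst).mul
        ((hg.comp measurable_snd).div measurable_snd)).ennreal_ofReal)
      (measurableSet_lt measurable_fst measurable_snd)).aemeasurable
  have hL1 : L = ∫⁻ r in Ioi r₀, ∫⁻ rt, F r rt := by
    apply lintegral_congr_ae
    filter_upwards [hmem] with r hr
    have hr0 : (0:ℝ) ≤ r := (lt_trans hr₀ hr).le
    rw [hFdef]
    dsimp only
    rw [lintegral_indicator measurableSet_Ioi]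
    have : ∀ rt : ℝ, ENNReal.ofReal (r ^ α * (g rt / rt))
        = ENNReal.ofReal (r ^ α) * ENNReal.ofReal (g rt / rt) :=
      fun rt => ENNReal.ofReal_mul (Real.rpow_nonneg hr0 _)
    simp_rw [this]
    rw [lintegral_const_mul _ hmeasofdiv]
  -- the two comparison functions
  set D₁ : ℝ → ℝ := fun s => (1 / (α + 1)) * (s ^ α * g s) with hD₁def
  set D₂ : ℝ → ℝ := fun s => (r₀ ^ (α + 1) / (α + 1)) * (g s / s) with hD₂def
  have hinner2 : ∀ rt : ℝ, (∫⁻ r in Ioi r₀, F r rt)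
      = (Ioi r₀).indicator (fun s => ENNReal.ofReal (D₁ s - D₂ s)) rt := by
    intro rt
    by_cases hrt : r₀ < rt
    · rw [indicator_of_mem (mem_Ioi.mpr hrt : rt ∈ Ioi r₀)]
      have hrt0 : (0:ℝ) < rt := lt_trans hr₀ hrt
      have hFr : ∀ r : ℝ, F r rt
          = (Iio rt).indicator (fun r => ENNReal.ofReal (r ^ α * (g rt / rt))) r := by
        intro r
        simp [hFdef, Set.indicator_apply, mem_Ioi, mem_Iio]
      simp_rw [hFr]
      rw [lintegral_indicator measurableSet_Iio,
        Measure.restrict_restrict measurableSet_Iio, Iio_inter_Ioi]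
      have hc : 0 ≤ g rt / rt := div_nonneg (hgnn rt) hrt0.le
      simp_rw [ENNReal.ofReal_mul' hc]
      rw [lintegral_mul_const _ hmeasofrp]
      have hintJ : IntegrableOn (fun r : ℝ => r ^ α) (Ioo r₀ rt) :=
        ((hcont.intervalIntegrable r₀ rt).1).mono_set Ioo_subset_Ioc_self
      have hnnJ : 0 ≤ᵐ[volume.restrict (Ioo r₀ rt)] fun r : ℝ => r ^ α := by
        filter_upwards [self_mem_ae_restrict measurableSet_Ioo (μ := volume)] with r hr
        exact Real.rpow_nonneg (lt_trans hr₀ hr.1).le _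
      have hJ : (∫⁻ r in Ioo r₀ rt, ENNReal.ofReal (r ^ α))
          = ENNReal.ofReal ((rt ^ (α + 1) - r₀ ^ (α + 1)) / (α + 1)) := by
        rw [← ofReal_integral_eq_lintegral_ofReal hintJ hnnJ]
        congr 1
        rw [← integral_Ioc_eq_integral_Ioo, ← intervalIntegral.integral_of_le hrt.le,
          integral_rpow (Or.inl (by linarith))]
      rw [hJ, ← ENNReal.ofReal_mul ?_]
      · congr 1
        have hrE : rt ^ (α + 1) = rt ^ α * rt := Real.rpow_add_one hrt0.ne' α
        rw [hD₁def, hD₂def]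
        dsimp only
        rw [hrE]
        field_simp
      · have h1 : r₀ ^ (α + 1) ≤ rt ^ (α + 1) :=
          Real.rpow_le_rpow hr₀.le hrt.le (by linarith)
        have := sub_nonneg.mpr h1
        positivity
    · rw [indicator_of_notMem (by simpa [mem_Ioi] using hrt : rt ∉ Ioi r₀)]
      rw [setLIntegral_congr_fun measurableSet_Ioi
        (fun r (hr : r ∈ Ioi r₀) => ?_), lintegral_zero]
      rw [hFdef]
      dsimp only
      rw [indicator_of_notMem]
      simp only [mem_Ioi, not_lt]
      exact le_trans (not_lt.1 hrt) (le_of_lt hr)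
  have hswap : L = ∫⁻ rt in Ioi r₀, ENNReal.ofReal (D₁ rt - D₂ rt) := by
    rw [hL1, lintegral_lintegral_swap hFmeas]
    simp_rw [hinner2]
    rw [lintegral_indicator measurableSet_Ioi]
  -- comparison D₂ ≤ D₁ on Ioi r₀
  have hD2nn : ∀ s, r₀ < s → 0 ≤ D₂ s := by
    intro s hs
    have hs0 : (0:ℝ) < s := lt_trans hr₀ hs
    exact mul_nonneg (div_nonneg (Real.rpow_nonneg hr₀.le _) hα1.le)
      (div_nonneg (hgnn s) hs0.le)
  have hD21 : ∀ s, r₀ < s → D₂ s ≤ D₁ s := by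
    intro s hs
    have hs0 : (0:ℝ) < s := lt_trans hr₀ hs
    have h1 : r₀ ^ (α + 1) ≤ s ^ (α + 1) :=
      Real.rpow_le_rpow hr₀.le hs.le (by linarith)
    have h2 : s ^ (α + 1) = s ^ α * s := Real.rpow_add_one hs0.ne' α
    have h3 : r₀ ^ (α + 1) * (g s / s) ≤ s ^ α * g s := by
      calc r₀ ^ (α + 1) * (g s / s) ≤ s ^ (α + 1) * (g s / s) :=
            mul_le_mul_of_nonneg_right h1 (div_nonneg (hgnn s) hs0.le)
        _ = s ^ α * g s := by rw [h2]; field_simp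
    rw [hD₁def, hD₂def]
    dsimp only
    calc r₀ ^ (α + 1) / (α + 1) * (g s / s)
        = (r₀ ^ (α + 1) * (g s / s)) * (α + 1)⁻¹ := by ring
      _ ≤ (s ^ α * g s) * (α + 1)⁻¹ :=
          mul_le_mul_of_nonneg_right h3 (inv_nonneg.mpr hα1.le)
      _ = 1 / (α + 1) * (s ^ α * g s) := by ring
  -- splitting the lintegral
  have hsplit : (∫⁻ s in Ioi r₀, ENNReal.ofReal (D₁ s))
      = L + ∫⁻ s in Ioi r₀, ENNReal.ofReal (D₂ s) := by
    have hmeas1 : Measurable fun s => ENNReal.ofReal (D₁ s - D₂ s) :=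
      (((measurable_const.mul (hcont.measurable.mul hg))).sub
        (measurable_const.mul hmeasdiv)).ennreal_ofReal
    calc (∫⁻ s in Ioi r₀, ENNReal.ofReal (D₁ s))
        = ∫⁻ s in Ioi r₀, (ENNReal.ofReal (D₁ s - D₂ s) + ENNReal.ofReal (D₂ s)) := by
          apply lintegral_congr_ae
          filter_upwards [hmem] with s hs
          rw [← ENNReal.ofReal_add (sub_nonneg.mpr (hD21 s hs)) (hD2nn s hs), sub_add_cancel]
      _ = (∫⁻ s in Ioi r₀, ENNReal.ofReal (D₁ s - D₂ s)) + ∫⁻ s in Ioi r₀, ENNReal.ofReal (D₂ s) :=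
          lintegral_add_left hmeas1 _
      _ = L + ∫⁻ s in Ioi r₀, ENNReal.ofReal (D₂ s) := by rw [hswap]
  -- evaluate the two lintegrals
  have hD1nnae : 0 ≤ᵐ[volume.restrict (Ioi r₀)] D₁ := by
    filter_upwards [hmem] with s hs
    exact mul_nonneg (by positivity)
      (mul_nonneg (Real.rpow_nonneg (lt_trans hr₀ hs).le _) (hgnn s))
  have hD2nnae : 0 ≤ᵐ[volume.restrict (Ioi r₀)] D₂ := by
    filter_upwards [hmem] with s hs
    exact hD2nn s hs
  have hD1int : IntegrableOn D₁ (Ioi r₀) := hA.const_mul _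
  have hD2int : IntegrableOn D₂ (Ioi r₀) := hB.const_mul _
  have hD1eval : (∫⁻ s in Ioi r₀, ENNReal.ofReal (D₁ s))
      = ENNReal.ofReal ((1 / (α + 1)) * A) := by
    rw [← ofReal_integral_eq_lintegral_ofReal hD1int hD1nnae]
    congr 1
    rw [hD₁def, hAdef]
    exact integral_const_mul _ _
  have hD2eval : (∫⁻ s in Ioi r₀, ENNReal.ofReal (D₂ s))
      = ENNReal.ofReal ((r₀ ^ (α + 1) / (α + 1)) * B) := by
    rw [← ofReal_integral_eq_lintegral_ofReal hD2int hD2nnae]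
    congr 1
    rw [hD₂def, hBdef]
    exact integral_const_mul _ _
  rw [hD1eval, hD2eval] at hsplit
  have hLfin : L ≠ ⊤ :=
    ne_top_of_le_ne_top ENNReal.ofReal_ne_top (hsplit ▸ le_self_add)
  have hAnn : 0 ≤ A :=
    setIntegral_nonneg measurableSet_Ioi fun s hs =>
      mul_nonneg (Real.rpow_nonneg (lt_trans hr₀ hs).le _) (hgnn s)
  have hBnn : 0 ≤ B :=
    setIntegral_nonneg measurableSet_Ioi fun s hs =>
      div_nonneg (hgnn s) (lt_trans hr₀ hs).le
  have hkey : (1 / (α + 1)) * A = L.toReal + (r₀ ^ (α + 1) / (α + 1)) * B := by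
    have := congrArg ENNReal.toReal hsplit
    rwa [ENNReal.toReal_add hLfin ENNReal.ofReal_ne_top,
      ENNReal.toReal_ofReal (mul_nonneg (by positivity) hAnn),
      ENNReal.toReal_ofReal (mul_nonneg (by positivity) hBnn)] at this
  -- rewrite the three integrals in the goal
  have hAeq : (∫ r in Ioi r₀, r ^ α * (β r * ψ r)) = A := integral_congr_ae hae2
  have hBeq : (∫ r in Ioi r₀, β r * ψ r / r) = B := by
    apply integral_congr_ae
    filter_upwards [hae1] with r h
    have h' : β r * ψ r = g r := h
    show β r * ψ r / r = g r / r
    rw [h']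
  rw [hLHS, hAeq, hBeq]
  linear_combination (-2 : ℝ) * hkey
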